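/- Screening test validity (zero branch): if for some u ∈ ℝ^m and ℓ ∈ S̄ one has D^ν(u) + π⁰_ℓ(u) > p̄, where p̄ is an upper bound on the optimal value p* of the full problem, then the optimal value of the node sub-problem at ν⁰ = (S₀ ∪ {ℓ}, S₁, S̄ \ {ℓ}) is strictly greater than p*. -/

import Mathlib

/-- Pivot value πᵢ(u) = M(|aᵢᵀu| − λ/M). -/
noncomputable def piv {m n : ℕ} (A : Fin m → Fin n → ℝ) (lam M : ℝ)
    (i : Fin n) (u : Fin m → ℝ) : ℝ :=
  M * (|∑ j, A j i * u j| - lam / M)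

/-- Pivot value π⁰ᵢ(u) = M·max(0, |aᵢᵀu| − λ/M). -/
noncomputable def piv0 {m n : ℕ} (A : Fin m → Fin n → ℝ) (lam M : ℝ)
    (i : Fin n) (u : Fin m → ℝ) : ℝ :=
  M * max 0 (|∑ j, A j i * u j| - lam / M)

/-- Pivot value π¹ᵢ(u) = M·max(0, λ/M − |aᵢᵀu|). -/
noncomputable def piv1 {m n : ℕ} (A : Fin m → Fin n → ℝ) (lam M : ℝ)
    (i : Fin n) (u : Fin m → ℝ) : ℝ :=
  M * max 0 (lam / M - |∑ j, A j i * u j|)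

/-- Dual objective D^ν(u) of the ℓ₁-relaxation at node ν = (S₀, S₁, S̄). -/
noncomputable def dualObj {m n : ℕ} (A : Fin m → Fin n → ℝ) (y : Fin m → ℝ)
    (lam M : ℝ) (S1 Sbar : Finset (Fin n)) (u : Fin m → ℝ) : ℝ :=
  (1/2) * ∑ j, (y j)^2 - (1/2) * ∑ j, (y j - u j)^2
    - ∑ i ∈ Sbar, piv0 A lam M i u - ∑ i ∈ S1, piv A lam M i u

/-- Values of the full ℓ₀-penalized problem over the box ‖x‖∞ ≤ M. -/
noncomputable def fullSet {m n : ℕ} (A : Fin m → Fin n → ℝ) (y : Fin m → ℝ)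
    (lam M : ℝ) : Set ℝ :=
  {c | ∃ x : Fin n → ℝ, (∀ i, |x i| ≤ M) ∧
    c = (1/2) * ∑ j, (y j - ∑ i, A j i * x i)^2
          + lam * ((Finset.univ.filter fun i => x i ≠ 0).card : ℝ)}

/-- Values of the node sub-problem at node ν = (S₀, S₁, S̄). -/
noncomputable def nodeSet {m n : ℕ} (A : Fin m → Fin n → ℝ) (y : Fin m → ℝ)
    (lam M : ℝ) (S0 S1 Sbar : Finset (Fin n)) : Set ℝ :=
  {c | ∃ x : Fin n → ℝ, (∀ i, |x i| ≤ M) ∧ (∀ i ∈ S0, x i = 0) ∧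
    c = (1/2) * ∑ j, (y j - ∑ i, A j i * x i)^2
          + lam * ((Sbar.filter fun i => x i ≠ 0).card : ℝ) + lam * S1.card}

lemma weak_duality {m n : ℕ} (A : Fin m → Fin n → ℝ) (y : Fin m → ℝ)
    (lam M : ℝ) (hM : 0 < M)
    (S0' S1 Sb : Finset (Fin n))
    (hcov : ∀ i, i ∉ S1 → i ∉ Sb → i ∈ S0')
    (h1b : Disjoint S1 Sb)
    (u : Fin m → ℝ) (x : Fin n → ℝ) (hx : ∀ i, |x i| ≤ M)
    (hx0 : ∀ i ∈ S0', x i = 0) :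
    dualObj A y lam M S1 Sb u ≤
      (1/2) * ∑ j, (y j - ∑ i, A j i * x i)^2
        + lam * ((Sb.filter fun i => x i ≠ 0).card : ℝ) + lam * S1.card := by
  have hMne : M ≠ 0 := ne_of_gt hM
  set c : Fin n → ℝ := fun i => ∑ j, A j i * u j with hc
  set s : Fin m → ℝ := fun j => ∑ i, A j i * x i with hs
  -- quadratic bound
  have hswap : ∑ j, u j * s j = ∑ i, x i * c i := by
    simp only [hs, hc, Finset.mul_sum]
    rw [Finset.sum_comm]
    exact Finset.sum_congr rfl fun i _ => Finset.sum_congr rfl fun j _ => by ring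
  have hnn : (0:ℝ) ≤ ∑ j, (y j - s j - u j)^2 :=
    Finset.sum_nonneg fun j _ => sq_nonneg _
  have hid : ∑ j, (y j - s j)^2 + ∑ j, (y j - u j)^2 + 2 * ∑ j, u j * s j
      = ∑ j, (y j)^2 + ∑ j, (y j - s j - u j)^2 := by
    rw [Finset.mul_sum, ← Finset.sum_add_distrib, ← Finset.sum_add_distrib,
      ← Finset.sum_add_distrib]
    exact Finset.sum_congr rfl fun j _ => by ring
  have hq : (1/2) * ∑ j, (y j)^2 - (1/2) * ∑ j, (y j - u j)^2 - ∑ i, x i * c i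
      ≤ (1/2) * ∑ j, (y j - s j)^2 := by
    rw [← hswap]; linarith
  -- split the linear term
  have hsplit : ∑ i, x i * c i = ∑ i ∈ S1, x i * c i + ∑ i ∈ Sb, x i * c i := by
    rw [← Finset.sum_union h1b]
    refine (Finset.sum_subset (Finset.subset_univ _) fun i _ hi => ?_).symm
    rw [Finset.mem_union, not_or] at hi
    rw [hx0 i (hcov i hi.1 hi.2), zero_mul]
  -- per-term bounds
  have hS1 : ∑ i ∈ S1, (x i * c i - lam) ≤ ∑ i ∈ S1, piv A lam M i u := by
    refine Finset.sum_le_sum fun i _ => ?_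
    have h1 : x i * c i ≤ M * |c i| := by
      calc x i * c i ≤ |x i * c i| := le_abs_self _
        _ = |x i| * |c i| := abs_mul _ _
        _ ≤ M * |c i| := mul_le_mul_of_nonneg_right (hx i) (abs_nonneg _)
    have : piv A lam M i u = M * |c i| - lam := by
      simp only [piv, hc]; field_simp
    linarith
  have hSb : ∑ i ∈ Sb, (x i * c i - (if x i ≠ 0 then lam else 0))
      ≤ ∑ i ∈ Sb, piv0 A lam M i u := by
    refine Finset.sum_le_sum fun i _ => ?_
    have hp0 : M * (|c i| - lam / M) ≤ piv0 A lam M i u :=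
      mul_le_mul_of_nonneg_left (le_max_right _ _) hM.le
    have hp0' : M * (|c i| - lam / M) = M * |c i| - lam := by field_simp
    have hp0nn : 0 ≤ piv0 A lam M i u :=
      mul_nonneg hM.le (le_max_left _ _)
    by_cases h : x i = 0
    · simp [h, hp0nn]
    · have h1 : x i * c i ≤ M * |c i| := by
        calc x i * c i ≤ |x i * c i| := le_abs_self _
          _ = |x i| * |c i| := abs_mul _ _
          _ ≤ M * |c i| := mul_le_mul_of_nonneg_right (hx i) (abs_nonneg _)
      simp only [h, if_pos, ne_eq, not_false_eq_true]
      linarith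
  have hcard1 : lam * (S1.card : ℝ) = ∑ _i ∈ S1, lam := by
    rw [Finset.sum_const, nsmul_eq_mul, mul_comm]
  have hcardb : lam * ((Sb.filter fun i => x i ≠ 0).card : ℝ)
      = ∑ i ∈ Sb, (if x i ≠ 0 then lam else 0) := by
    rw [← Finset.sum_filter, Finset.sum_const, nsmul_eq_mul, mul_comm]
  have hsum1 := Finset.sum_sub_distrib (s := S1) (f := fun i => x i * c i) (g := fun _ => lam)
  have hsumb := Finset.sum_sub_distrib (s := Sb) (f := fun i => x i * c i)
    (g := fun i => if x i ≠ 0 then lam else 0)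
  simp only [dualObj]
  rw [hcard1, hcardb]
  rw [hsum1] at hS1
  rw [hsumb] at hSb
  rw [hsplit] at hq
  linarith

/-- Node-screening test validity (zero branch): if D^ν(u) + π⁰_ℓ(u) > p̄ ≥ p*,
then the optimal value of the node sub-problem at ν⁰ = (S₀ ∪ {ℓ}, S₁, S̄ ∖ {ℓ})
is strictly greater than p*. -/
theorem screening_zero_branch {m n : ℕ} (A : Fin m → Fin n → ℝ) (y : Fin m → ℝ)
    (lam M : ℝ) (hlam : 0 < lam) (hM : 0 < M)
    (S0 S1 Sbar : Finset (Fin n))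
    (hcover : S0 ∪ S1 ∪ Sbar = Finset.univ)
    (h01 : Disjoint S0 S1) (h0b : Disjoint S0 Sbar) (h1b : Disjoint S1 Sbar)
    (l : Fin n) (hl : l ∈ Sbar) (u : Fin m → ℝ) (pbar : ℝ)
    (hpbar : sInf (fullSet A y lam M) ≤ pbar)
    (htest : dualObj A y lam M S1 Sbar u + piv0 A lam M l u > pbar) :
    sInf (nodeSet A y lam M (insert l S0) S1 (Sbar.erase l))
      > sInf (fullSet A y lam M) := by
  set Sb := Sbar.erase l with hSb
  set S0' := insert l S0 with hS0'
  set D := dualObj A y lam M S1 Sb u with hD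
  have hDeq : D = dualObj A y lam M S1 Sbar u + piv0 A lam M l u := by
    simp only [hD, dualObj, hSb]
    rw [← Finset.add_sum_erase Sbar _ hl]
    ring
  have hcov : ∀ i, i ∉ S1 → i ∉ Sb → i ∈ S0' := by
    intro i hi1 hib
    have : i ∈ S0 ∪ S1 ∪ Sbar := hcover ▸ Finset.mem_univ i
    rcases Finset.mem_union.1 this with h | h
    · rcases Finset.mem_union.1 h with h | h
      · exact Finset.mem_insert_of_mem h
      · exact absurd h hi1
    · rcases eq_or_ne i l with rfl | hne
      · exact Finset.mem_insert_self _ _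
      · exact absurd (Finset.mem_erase.2 ⟨hne, h⟩) hib
  have h1b' : Disjoint S1 Sb := h1b.mono_right (Finset.erase_subset _ _)
  have hlb : ∀ c ∈ nodeSet A y lam M S0' S1 Sb, D ≤ c := by
    rintro c ⟨x, hx, hx0, rfl⟩
    exact weak_duality A y lam M hM S0' S1 Sb hcov h1b' u x hx hx0
  have hne : (nodeSet A y lam M S0' S1 Sb).Nonempty := by
    refine ⟨_, 0, fun i => by simp [hM.le], fun i _ => rfl, rfl⟩
  have h2 : D ≤ sInf (nodeSet A y lam M S0' S1 Sb) := le_csInf hne hlb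
  have h3 : pbar < D := by rw [hDeq]; exact htest
  linarith
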